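/- Let E = E_s ⊕ E_u be a Banach space over a valued field with adapted-type norm, A a linear homeomorphism preserving the splitting with Λ := max{‖A₂⁻¹‖(1+Lip(g_u)), ‖A₁‖ + Lip(g_s)} < 1 and Lip(h) < ‖A⁻¹‖⁻¹, and suppose additionally Lip(g) < ‖A⁻¹‖⁻¹, ‖A₂⁻¹‖(1 + Lip(h_u)) < 1 and ‖A₁‖ + Lip(h_s) < 1, where g, h : E → E are bounded Lipschitz. Let v be the unique bounded continuous map with (id + v) ∘ (A + h) = (A + g) ∘ (id + v). Then id + v : E → E is a homeomorphism, and w := (id + v)⁻¹ − id is the unique bounded continuous map satisfying (id + w) ∘ (A + g) = (A + h) ∘ (id + w). -/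

import Mathlib

open NNReal

open BoundedContinuousFunction

private theorem conj_aux {G : Type*} [AddCommGroup G] {a b c d e : G}
    (H : a + b + c = a + d + e) : d + e - b = c := by
  calc d + e - b = a + d + e - (a + b) := by abel
  _ = a + b + c - (a + b) := by rw [H]
  _ = c := by abel

private theorem conj_aux2 {G : Type*} [AddCommGroup G] {a b c d e : G}
    (H : a + b + c = a + d + e) : c - e + b = d := by
  calc c - e + b = a + b + c - (a + e) := by abel
  _ = a + d + e - (a + e) := by rw [H]
  _ = d := by abel

theorem conj_key {K Es Eu : Type*} [NontriviallyNormedField K]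
    [NormedAddCommGroup Es] [NormedSpace K Es] [CompleteSpace Es]
    [NormedAddCommGroup Eu] [NormedSpace K Eu] [CompleteSpace Eu]
    (A₁ : Es ≃L[K] Es) (A₂ : Eu ≃L[K] Eu)
    (g h : Es × Eu → Es × Eu) (Lg Lh Lgs Lgu : ℝ≥0)
    (hgL : LipschitzWith Lg g) (hhL : LipschitzWith Lh h)
    (hgsL : LipschitzWith Lgs (fun x => (g x).1))
    (hguL : LipschitzWith Lgu (fun x => (g x).2))
    (hgB : ∃ M : ℝ, ∀ x, ‖g x‖ ≤ M) (hhB : ∃ M : ℝ, ∀ x, ‖h x‖ ≤ M)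
    (hLh : (Lh : ℝ) < ‖((A₁.prodCongr A₂).symm : (Es × Eu) →L[K] (Es × Eu))‖⁻¹)
    (hΛ : max (‖(A₂.symm : Eu →L[K] Eu)‖ * (1 + (Lgu : ℝ)))
        (‖(A₁ : Es →L[K] Es)‖ + (Lgs : ℝ)) < 1) :
    ∃ v : Es × Eu → Es × Eu,
      (Continuous v ∧ (∃ M : ℝ, ∀ x, ‖v x‖ ≤ M) ∧
        ∀ x, (A₁.prodCongr A₂) x + h x + v ((A₁.prodCongr A₂) x + h x)
          = (A₁.prodCongr A₂) (x + v x) + g (x + v x)) ∧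
      ∀ v' : Es × Eu → Es × Eu,
        (Continuous v' ∧ (∃ M : ℝ, ∀ x, ‖v' x‖ ≤ M) ∧
          ∀ x, (A₁.prodCongr A₂) x + h x + v' ((A₁.prodCongr A₂) x + h x)
            = (A₁.prodCongr A₂) (x + v' x) + g (x + v' x)) → v' = v := by
  obtain ⟨Mg, hMg⟩ := hgB
  obtain ⟨Mh, hMh⟩ := hhB
  have hgc : Continuous g := hgL.continuous
  have hhc : Continuous h := hhL.continuous
  have hAapp : ∀ p : Es × Eu, (A₁.prodCongr A₂) p = (A₁ p.1, A₂ p.2) := fun _ => rfl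
  -- the homeomorphism F = A + h
  have approx : ApproximatesLinearOn (fun x => (A₁.prodCongr A₂) x + h x)
      ((A₁.prodCongr A₂ : (Es × Eu) ≃L[K] (Es × Eu)) : (Es × Eu) →L[K] (Es × Eu)) Set.univ Lh := by
    intro x _ y _
    simp only [ContinuousLinearEquiv.coe_coe, map_sub]
    have e : (A₁.prodCongr A₂) x + h x - ((A₁.prodCongr A₂) y + h y)
        - ((A₁.prodCongr A₂) x - (A₁.prodCongr A₂) y) = h x - h y := by abel
    rw [e]
    simpa [dist_eq_norm] using hhL.dist_le_mul x y
  have hc : (Lh : ℝ≥0) < (‖((A₁.prodCongr A₂).symm : (Es × Eu) →L[K] (Es × Eu))‖₊)⁻¹ := by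
    rw [← NNReal.coe_lt_coe, NNReal.coe_inv, coe_nnnorm]; exact hLh
  let F : (Es × Eu) ≃ₜ (Es × Eu) := approx.toHomeomorph _ (Or.inr hc)
  have hF : ∀ x, F x = (A₁.prodCongr A₂) x + h x := fun _ => rfl
  -- the contraction operator
  let T : ((Es × Eu) →ᵇ (Es × Eu)) → ((Es × Eu) →ᵇ (Es × Eu)) := fun v =>
    BoundedContinuousFunction.ofNormedAddCommGroup
      (fun y => (A₁ (v (F.symm y)).1 + (g (F.symm y + v (F.symm y))).1 - (h (F.symm y)).1,
        A₂.symm ((v (F y)).2 - (g (y + v y)).2 + (h y).2)))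
      (by
        refine Continuous.prodMk ?_ ?_
        · exact ((A₁.continuous.comp ((v.continuous.comp F.symm.continuous).fst)).add
            ((hgc.comp (F.symm.continuous.add (v.continuous.comp F.symm.continuous))).fst)).sub
            ((hhc.comp F.symm.continuous).fst)
        · exact A₂.symm.continuous.comp
            ((((v.continuous.comp F.continuous).snd).sub
              ((hgc.comp (continuous_id.add v.continuous)).snd)).add hhc.snd))
      (max (‖(A₁ : Es →L[K] Es)‖ * ‖v‖ + Mg + Mh)
        (‖(A₂.symm : Eu →L[K] Eu)‖ * (‖v‖ + (Mg + Mh))))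
      (by
        intro y
        rw [Prod.norm_def]
        refine max_le (le_max_of_le_left ?_) (le_max_of_le_right ?_)
        · calc ‖A₁ (v (F.symm y)).1 + (g (F.symm y + v (F.symm y))).1 - (h (F.symm y)).1‖
              ≤ ‖A₁ (v (F.symm y)).1 + (g (F.symm y + v (F.symm y))).1‖ + ‖(h (F.symm y)).1‖ :=
                norm_sub_le _ _
          _ ≤ ‖A₁ (v (F.symm y)).1‖ + ‖(g (F.symm y + v (F.symm y))).1‖ + ‖(h (F.symm y)).1‖ :=
                add_le_add_left (norm_add_le _ _) _
          _ ≤ ‖(A₁ : Es →L[K] Es)‖ * ‖v‖ + Mg + Mh := by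
              refine add_le_add (add_le_add ?_ ?_) ?_
              · refine ((A₁ : Es →L[K] Es).le_opNorm _).trans ?_
                exact mul_le_mul_of_nonneg_left
                  ((norm_fst_le _).trans (v.norm_coe_le_norm _)) (norm_nonneg _)
              · exact (norm_fst_le _).trans (hMg _)
              · exact (norm_fst_le _).trans (hMh _)
        · calc ‖A₂.symm ((v (F y)).2 - (g (y + v y)).2 + (h y).2)‖
              ≤ ‖(A₂.symm : Eu →L[K] Eu)‖ * ‖(v (F y)).2 - (g (y + v y)).2 + (h y).2‖ :=
                (A₂.symm : Eu →L[K] Eu).le_opNorm _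
          _ ≤ ‖(A₂.symm : Eu →L[K] Eu)‖ * (‖v‖ + (Mg + Mh)) := by
              refine mul_le_mul_of_nonneg_left ?_ (norm_nonneg _)
              calc ‖(v (F y)).2 - (g (y + v y)).2 + (h y).2‖
                  ≤ ‖(v (F y)).2 - (g (y + v y)).2‖ + ‖(h y).2‖ := norm_add_le _ _
                _ ≤ ‖(v (F y)).2‖ + ‖(g (y + v y)).2‖ + ‖(h y).2‖ :=
                    add_le_add_left (norm_sub_le _ _) _
                _ ≤ ‖v‖ + Mg + Mh := by
                    refine add_le_add (add_le_add ?_ ?_) ?_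
                    · exact (norm_snd_le _).trans (v.norm_coe_le_norm _)
                    · exact (norm_snd_le _).trans (hMg _)
                    · exact (norm_snd_le _).trans (hMh _)
                _ = ‖v‖ + (Mg + Mh) := by ring)
  have hTapp : ∀ (v : (Es × Eu) →ᵇ (Es × Eu)) y, T v y =
      (A₁ (v (F.symm y)).1 + (g (F.symm y + v (F.symm y))).1 - (h (F.symm y)).1,
        A₂.symm ((v (F y)).2 - (g (y + v y)).2 + (h y).2)) := fun _ _ => rfl
  -- contraction constant
  set K0 : ℝ≥0 := max (‖(A₂.symm : Eu →L[K] Eu)‖₊ * (1 + Lgu)) (‖(A₁ : Es →L[K] Es)‖₊ + Lgs)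
    with hK0
  have hK0coe : (K0 : ℝ) = max (‖(A₂.symm : Eu →L[K] Eu)‖ * (1 + (Lgu : ℝ)))
      (‖(A₁ : Es →L[K] Es)‖ + (Lgs : ℝ)) := by
    rw [hK0]; push_cast; rfl
  have hK01 : K0 < 1 := by
    rw [← NNReal.coe_lt_coe, hK0coe, NNReal.coe_one]; exact hΛ
  have hK0l : ‖(A₂.symm : Eu →L[K] Eu)‖ * (1 + (Lgu : ℝ)) ≤ (K0 : ℝ) := by
    rw [hK0coe]; exact le_max_left _ _
  have hK0r : ‖(A₁ : Es →L[K] Es)‖ + (Lgs : ℝ) ≤ (K0 : ℝ) := by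
    rw [hK0coe]; exact le_max_right _ _
  -- contraction estimate
  have hT_lip : ∀ v₁ v₂ : (Es × Eu) →ᵇ (Es × Eu),
      dist (T v₁) (T v₂) ≤ (K0 : ℝ) * dist v₁ v₂ := by
    intro v₁ v₂
    rw [BoundedContinuousFunction.dist_le (mul_nonneg K0.coe_nonneg dist_nonneg)]
    intro y
    rw [hTapp, hTapp, Prod.dist_eq]
    have hD : ∀ z, ‖v₁ z - v₂ z‖ ≤ dist v₁ v₂ := fun z => by
      rw [← dist_eq_norm]; exact BoundedContinuousFunction.dist_coe_le_dist z
    refine max_le ?_ ?_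
    · rw [dist_eq_norm]
      have e : A₁ (v₁ (F.symm y)).1 + (g (F.symm y + v₁ (F.symm y))).1 - (h (F.symm y)).1
          - (A₁ (v₂ (F.symm y)).1 + (g (F.symm y + v₂ (F.symm y))).1 - (h (F.symm y)).1)
          = (A₁ (v₁ (F.symm y)).1 - A₁ (v₂ (F.symm y)).1)
            + ((g (F.symm y + v₁ (F.symm y))).1 - (g (F.symm y + v₂ (F.symm y))).1) := by abel
      rw [e]
      calc ‖(A₁ (v₁ (F.symm y)).1 - A₁ (v₂ (F.symm y)).1)
            + ((g (F.symm y + v₁ (F.symm y))).1 - (g (F.symm y + v₂ (F.symm y))).1)‖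
          ≤ ‖A₁ (v₁ (F.symm y)).1 - A₁ (v₂ (F.symm y)).1‖
            + ‖(g (F.symm y + v₁ (F.symm y))).1 - (g (F.symm y + v₂ (F.symm y))).1‖ :=
            norm_add_le _ _
        _ ≤ ‖(A₁ : Es →L[K] Es)‖ * dist v₁ v₂ + (Lgs : ℝ) * dist v₁ v₂ := by
            refine add_le_add ?_ ?_
            · rw [← map_sub]
              refine ((A₁ : Es →L[K] Es).le_opNorm _).trans ?_
              refine mul_le_mul_of_nonneg_left ?_ (norm_nonneg _)
              exact (norm_fst_le (v₁ (F.symm y) - v₂ (F.symm y))).trans (hD _)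
            · rw [← dist_eq_norm]
              refine (hgsL.dist_le_mul _ _).trans ?_
              refine mul_le_mul_of_nonneg_left ?_ Lgs.coe_nonneg
              rw [dist_add_left, dist_eq_norm]
              exact hD _
        _ = (‖(A₁ : Es →L[K] Es)‖ + (Lgs : ℝ)) * dist v₁ v₂ := by ring
        _ ≤ (K0 : ℝ) * dist v₁ v₂ := mul_le_mul_of_nonneg_right hK0r dist_nonneg
    · rw [dist_eq_norm, ← map_sub]
      have e : ((v₁ (F y)).2 - (g (y + v₁ y)).2 + (h y).2)
          - ((v₂ (F y)).2 - (g (y + v₂ y)).2 + (h y).2)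
          = ((v₁ (F y)).2 - (v₂ (F y)).2) - ((g (y + v₁ y)).2 - (g (y + v₂ y)).2) := by abel
      rw [e]
      calc ‖A₂.symm (((v₁ (F y)).2 - (v₂ (F y)).2) - ((g (y + v₁ y)).2 - (g (y + v₂ y)).2))‖
          ≤ ‖(A₂.symm : Eu →L[K] Eu)‖
            * ‖((v₁ (F y)).2 - (v₂ (F y)).2) - ((g (y + v₁ y)).2 - (g (y + v₂ y)).2)‖ :=
            (A₂.symm : Eu →L[K] Eu).le_opNorm _
        _ ≤ ‖(A₂.symm : Eu →L[K] Eu)‖ * (dist v₁ v₂ + (Lgu : ℝ) * dist v₁ v₂) := by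
            refine mul_le_mul_of_nonneg_left ?_ (norm_nonneg _)
            refine (norm_sub_le _ _).trans (add_le_add ?_ ?_)
            · exact (norm_snd_le (v₁ (F y) - v₂ (F y))).trans (hD _)
            · rw [← dist_eq_norm]
              refine (hguL.dist_le_mul _ _).trans ?_
              refine mul_le_mul_of_nonneg_left ?_ Lgu.coe_nonneg
              rw [dist_add_left, dist_eq_norm]
              exact hD _
        _ = ‖(A₂.symm : Eu →L[K] Eu)‖ * (1 + (Lgu : ℝ)) * dist v₁ v₂ := by ring
        _ ≤ (K0 : ℝ) * dist v₁ v₂ := mul_le_mul_of_nonneg_right hK0l dist_nonneg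
  have hcontr : ContractingWith K0 T := ⟨hK01, LipschitzWith.of_dist_le_mul hT_lip⟩
  set vf := ContractingWith.fixedPoint T hcontr with hvf
  have hfix : T vf = vf := hcontr.fixedPoint_isFixedPt
  have hfe1 : ∀ y, (vf y).1 =
      A₁ (vf (F.symm y)).1 + (g (F.symm y + vf (F.symm y))).1 - (h (F.symm y)).1 := by
    intro y
    conv_lhs => rw [← hfix]
    rfl
  have hfe2 : ∀ y, (vf y).2 =
      A₂.symm ((vf (F y)).2 - (g (y + vf y)).2 + (h y).2) := by
    intro y
    conv_lhs => rw [← hfix]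
    rfl
  -- the equation for vf
  have hEqvf : ∀ x, (A₁.prodCongr A₂) x + h x + vf ((A₁.prodCongr A₂) x + h x)
      = (A₁.prodCongr A₂) (x + vf x) + g (x + vf x) := by
    intro x
    rw [← hF x]
    have e1 := hfe1 (F x)
    rw [F.symm_apply_apply] at e1
    have e2' := congrArg (fun t => A₂ t) (hfe2 x)
    simp only [A₂.apply_symm_apply] at e2'
    have hFx1 : (F x).1 = A₁ x.1 + (h x).1 := by rw [hF x]; rfl
    have hFx2 : (F x).2 = A₂ x.2 + (h x).2 := by rw [hF x]; rfl
    have hA1 : ((A₁.prodCongr A₂) (x + vf x)).1 = A₁ x.1 + A₁ (vf x).1 := by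
      show A₁ (x + vf x).1 = _
      rw [Prod.fst_add, map_add]
    have hA2 : ((A₁.prodCongr A₂) (x + vf x)).2 = A₂ x.2 + A₂ (vf x).2 := by
      show A₂ (x + vf x).2 = _
      rw [Prod.snd_add, map_add]
    refine Prod.ext ?_ ?_
    · show (F x + vf (F x)).1 = ((A₁.prodCongr A₂) (x + vf x) + g (x + vf x)).1
      rw [Prod.fst_add, Prod.fst_add, hFx1, hA1, e1]
      abel
    · show (F x + vf (F x)).2 = ((A₁.prodCongr A₂) (x + vf x) + g (x + vf x)).2
      rw [Prod.snd_add, Prod.snd_add, hFx2, hA2, e2']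
      abel
  refine ⟨⇑vf, ⟨vf.continuous, ⟨‖vf‖, fun x => vf.norm_coe_le_norm x⟩, hEqvf⟩, ?_⟩
  -- uniqueness
  rintro v' ⟨hv'C, ⟨M', hM'⟩, hv'Eq⟩
  let v'' : (Es × Eu) →ᵇ (Es × Eu) :=
    BoundedContinuousFunction.ofNormedAddCommGroup v' hv'C M' hM'
  have hv''coe : ∀ x, v'' x = v' x := fun _ => rfl
  have hfix'' : Function.IsFixedPt T v'' := by
    have key : ∀ z, (A₁.prodCongr A₂) z + h z = F z := fun z => (hF z).symm
    refine BoundedContinuousFunction.ext fun y => ?_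
    rw [hTapp]
    have e1 := congrArg Prod.fst (hv'Eq (F.symm y))
    have e2 := congrArg Prod.snd (hv'Eq y)
    simp only [Prod.fst_add, Prod.snd_add] at e1 e2
    rw [key (F.symm y), F.apply_symm_apply] at e1
    rw [key y] at e2
    have hA1 : ∀ p : Es × Eu, ((A₁.prodCongr A₂) p).1 = A₁ p.1 := fun _ => rfl
    have hA2 : ∀ p : Es × Eu, ((A₁.prodCongr A₂) p).2 = A₂ p.2 := fun _ => rfl
    simp only [hA1, hA2, Prod.fst_add, Prod.snd_add, map_add] at e1 e2
    refine Prod.ext ?_ ?_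
    · show A₁ (v'' (F.symm y)).1 + (g (F.symm y + v'' (F.symm y))).1 - (h (F.symm y)).1
        = (v'' y).1
      simp only [hv''coe]
      exact conj_aux e1
    · show A₂.symm ((v'' (F y)).2 - (g (y + v'' y)).2 + (h y).2) = (v'' y).2
      simp only [hv''coe]
      rw [A₂.symm_apply_eq]
      exact conj_aux2 e2
  have hv''vf : v'' = vf := hcontr.fixedPoint_unique hfix''
  funext x
  calc v' x = v'' x := rfl
  _ = vf x := by rw [hv''vf]


/-- If both `(g,h)` and `(h,g)` satisfy the conditions of the conjugacy lemma,
then the conjugacy `id + v` from `A + h` to `A + g` is a homeomorphism, and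
`w := (id + v)⁻¹ - id` is the unique bounded continuous map with
`(id + w) ∘ (A + g) = (A + h) ∘ (id + w)`. -/
theorem conjugacy_is_homeomorphism
    {K Es Eu : Type*} [NontriviallyNormedField K]
    [NormedAddCommGroup Es] [NormedSpace K Es] [CompleteSpace Es]
    [NormedAddCommGroup Eu] [NormedSpace K Eu] [CompleteSpace Eu]
    (A₁ : Es ≃L[K] Es) (A₂ : Eu ≃L[K] Eu)
    (g h : Es × Eu → Es × Eu)
    (Lg Lh Lgs Lgu Lhs Lhu : ℝ≥0)
    (hgL : LipschitzWith Lg g) (hhL : LipschitzWith Lh h)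
    (hgsL : LipschitzWith Lgs (fun x => (g x).1))
    (hguL : LipschitzWith Lgu (fun x => (g x).2))
    (hhsL : LipschitzWith Lhs (fun x => (h x).1))
    (hhuL : LipschitzWith Lhu (fun x => (h x).2))
    (hgB : ∃ M : ℝ, ∀ x, ‖g x‖ ≤ M) (hhB : ∃ M : ℝ, ∀ x, ‖h x‖ ≤ M)
    (hLh : (Lh : ℝ) < ‖((A₁.prodCongr A₂).symm : (Es × Eu) →L[K] (Es × Eu))‖⁻¹)
    (hΛ : max (‖(A₂.symm : Eu →L[K] Eu)‖ * (1 + (Lgu : ℝ)))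
        (‖(A₁ : Es →L[K] Es)‖ + (Lgs : ℝ)) < 1)
    (hLg : (Lg : ℝ) < ‖((A₁.prodCongr A₂).symm : (Es × Eu) →L[K] (Es × Eu))‖⁻¹)
    (hΛ' : ‖(A₂.symm : Eu →L[K] Eu)‖ * (1 + (Lhu : ℝ)) < 1)
    (hΛ'' : ‖(A₁ : Es →L[K] Es)‖ + (Lhs : ℝ) < 1)
    (v : Es × Eu → Es × Eu)
    (hvC : Continuous v) (hvB : ∃ M : ℝ, ∀ x, ‖v x‖ ≤ M)
    (hvEq : ∀ x, (A₁.prodCongr A₂) x + h x + v ((A₁.prodCongr A₂) x + h x)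
      = (A₁.prodCongr A₂) (x + v x) + g (x + v x)) :
    ∃ w : Es × Eu → Es × Eu,
      Continuous w ∧ (∃ M : ℝ, ∀ x, ‖w x‖ ≤ M) ∧
      (∀ x, (x + v x) + w (x + v x) = x) ∧
      (∀ x, (x + w x) + v (x + w x) = x) ∧
      (∀ x, (A₁.prodCongr A₂) x + g x + w ((A₁.prodCongr A₂) x + g x)
        = (A₁.prodCongr A₂) (x + w x) + h (x + w x)) ∧
      (∀ w' : Es × Eu → Es × Eu,
        (Continuous w' ∧ (∃ M : ℝ, ∀ x, ‖w' x‖ ≤ M) ∧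
          ∀ x, (A₁.prodCongr A₂) x + g x + w' ((A₁.prodCongr A₂) x + g x)
            = (A₁.prodCongr A₂) (x + w' x) + h (x + w' x)) → w' = w) := by
  obtain ⟨Mv, hMv⟩ := hvB
  -- the conjugacy in the other direction
  obtain ⟨w, ⟨hwC, ⟨Mw, hMw⟩, hwEq⟩, hwU⟩ :=
    conj_key A₁ A₂ h g Lh Lg Lhs Lhu hhL hgL hhsL hhuL hhB hgB hLg (max_lt hΛ' hΛ'')
  -- uniqueness for the (h, h) case
  obtain ⟨vhh, -, hhU⟩ :=
    conj_key A₁ A₂ h h Lh Lh Lhs Lhu hhL hhL hhsL hhuL hhB hhB hLh (max_lt hΛ' hΛ'')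
  -- uniqueness for the (g, g) case
  obtain ⟨vgg, -, ggU⟩ :=
    conj_key A₁ A₂ g g Lg Lg Lgs Lgu hgL hgL hgsL hguL hgB hgB hLg hΛ
  have hzero : ∀ x : Es × Eu, (A₁.prodCongr A₂) x + h x + (fun _ : Es × Eu => (0 : Es × Eu)) ((A₁.prodCongr A₂) x + h x)
      = (A₁.prodCongr A₂) (x + (fun _ : Es × Eu => (0 : Es × Eu)) x)
        + h (x + (fun _ : Es × Eu => (0 : Es × Eu)) x) := by
    intro x; simp
  have hzerog : ∀ x : Es × Eu, (A₁.prodCongr A₂) x + g x + (fun _ : Es × Eu => (0 : Es × Eu)) ((A₁.prodCongr A₂) x + g x)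
      = (A₁.prodCongr A₂) (x + (fun _ : Es × Eu => (0 : Es × Eu)) x)
        + g (x + (fun _ : Es × Eu => (0 : Es × Eu)) x) := by
    intro x; simp
  -- u := v + w ∘ (id + v) conjugates A + h to itself, hence is 0
  have hu : (fun x => v x + w (x + v x)) = fun _ : Es × Eu => (0 : Es × Eu) := by
    have h1 : (fun x => v x + w (x + v x)) = vhh := by
      refine hhU _ ⟨?_, ⟨Mv + Mw, fun x => (norm_add_le _ _).trans (add_le_add (hMv x) (hMw _))⟩, ?_⟩
      · exact hvC.add (hwC.comp (continuous_id.add hvC))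
      · intro x
        show (A₁.prodCongr A₂) x + h x + (v ((A₁.prodCongr A₂) x + h x)
            + w ((A₁.prodCongr A₂) x + h x + v ((A₁.prodCongr A₂) x + h x)))
          = (A₁.prodCongr A₂) (x + (v x + w (x + v x))) + h (x + (v x + w (x + v x)))
        rw [← add_assoc x, ← add_assoc ((A₁.prodCongr A₂) x + h x), hvEq x, hwEq (x + v x)]
    have h2 : (fun _ : Es × Eu => (0 : Es × Eu)) = vhh := by
      refine hhU _ ⟨continuous_const, ⟨0, fun x => by simp⟩, hzero⟩
    rw [h1, h2]
  -- u' := w + v ∘ (id + w) conjugates A + g to itself, hence is 0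
  have hu' : (fun x => w x + v (x + w x)) = fun _ : Es × Eu => (0 : Es × Eu) := by
    have h1 : (fun x => w x + v (x + w x)) = vgg := by
      refine ggU _ ⟨?_, ⟨Mw + Mv, fun x => (norm_add_le _ _).trans (add_le_add (hMw x) (hMv _))⟩, ?_⟩
      · exact hwC.add (hvC.comp (continuous_id.add hwC))
      · intro x
        show (A₁.prodCongr A₂) x + g x + (w ((A₁.prodCongr A₂) x + g x)
            + v ((A₁.prodCongr A₂) x + g x + w ((A₁.prodCongr A₂) x + g x)))
          = (A₁.prodCongr A₂) (x + (w x + v (x + w x))) + g (x + (w x + v (x + w x)))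
        rw [← add_assoc x, ← add_assoc ((A₁.prodCongr A₂) x + g x), hwEq x, hvEq (x + w x)]
    have h2 : (fun _ : Es × Eu => (0 : Es × Eu)) = vgg := by
      refine ggU _ ⟨continuous_const, ⟨0, fun x => by simp⟩, hzerog⟩
    rw [h1, h2]
  refine ⟨w, hwC, ⟨Mw, hMw⟩, ?_, ?_, hwEq, hwU⟩
  · intro x
    have := congrFun hu x
    rw [add_assoc, this, add_zero]
  · intro x
    have := congrFun hu' x
    rw [add_assoc, this, add_zero]
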